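/- arXiv:1605.06460 — 2 statements merged into one kernel-verified Lean document; each statement's English description precedes it below -/
import Mathlib

section
/- Let (E,ℒ,ℬ) be a weakly left-resolving labelled space with ℬ closed under relative complements, let α be a nonempty finite labelled path and β ∈ ℒ^{≤∞}(E) be such that αβ ∈ ℒ^{≤∞}(E). If ξ ∈ T_{αβ} with complete family {ξ_n}_{0≤n≤|αβ|}, then the filter in E(S) with word β associated with the complete family {h_{[α]β_{1,n}}(ξ_{|α|+n})}_{0≤n≤|β|} is a tight filter. -/
open Set

/-- A filter in the sub-poset `P` of a powerset, ordered by inclusion, with least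
element `∅`: nonempty, upward-closed within `P`, downward-directed, not containing `∅`. -/
def IsFilterIn {V : Type*} (P F : Set (Set V)) : Prop :=
  F ⊆ P ∧ F.Nonempty ∧ ∅ ∉ F ∧
    (∀ X ∈ F, ∀ Y ∈ P, X ⊆ Y → Y ∈ F) ∧
    (∀ X ∈ F, ∀ Y ∈ F, ∃ Z ∈ F, Z ⊆ X ∧ Z ⊆ Y)

/-- An ultrafilter in `P` is a maximal filter in `P`. -/
def IsUltrafilterIn {V : Type*} (P F : Set (Set V)) : Prop :=
  IsFilterIn P F ∧ ∀ G : Set (Set V), IsFilterIn P G → F ⊆ G → G = F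

/-- A labelled graph: a directed graph with source, range and a surjective labelling map. -/
structure LGraph (V Edg A : Type*) where
  src : Edg → V
  rng : Edg → V
  lbl : Edg → A
  lbl_surj : Function.Surjective lbl

namespace LGraph

variable {V Edg A : Type*} (G : LGraph V Edg A)

/-- A finite path: a list of composable edges. -/
def IsPath (p : List Edg) : Prop := p.Chain' fun e f => G.rng e = G.src f

/-- The relative range `r(S, α)`, with the convention `r(S, ω) = S`. -/
def relR (S : Set V) : List A → Set V
  | [] => S
  | a :: w =>
      {v | ∃ p : List Edg, G.IsPath p ∧ p.map G.lbl = a :: w ∧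
        ∃ h : p ≠ [], G.src (p.head h) ∈ S ∧ G.rng (p.getLast h) = v}

/-- `α ∈ ℒ*(E)` : a finite labelled path (including the empty word). -/
def IsLbl (α : List A) : Prop := ∃ p : List Edg, G.IsPath p ∧ p.map G.lbl = α

/-- An infinite labelled path. -/
def IsLblInf (α : ℕ → A) : Prop :=
  ∃ p : ℕ → Edg, (∀ n, G.rng (p n) = G.src (p (n + 1))) ∧ ∀ n, G.lbl (p n) = α n

end LGraph

/-- A labelled space: a labelled graph together with an accommodating family `ℬ`. -/
structure LabelledSpace (V Edg A : Type*) extends LGraph V Edg A where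
  ℬ : Set (Set V)
  inter_mem : ∀ ⦃X Y : Set V⦄, X ∈ ℬ → Y ∈ ℬ → X ∩ Y ∈ ℬ
  union_mem : ∀ ⦃X Y : Set V⦄, X ∈ ℬ → Y ∈ ℬ → X ∪ Y ∈ ℬ
  range_mem : ∀ α : List A, α ≠ [] → toLGraph.IsLbl α → toLGraph.relR Set.univ α ∈ ℬ
  relR_mem : ∀ ⦃X : Set V⦄, X ∈ ℬ → ∀ α : List A, toLGraph.IsLbl α → toLGraph.relR X α ∈ ℬ

/-- Words of length `≤ ∞`: finite words are lists, infinite words are sequences. -/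
abbrev LWord (A : Type*) := List A ⊕ (ℕ → A)

/-- The length of a word in `ℕ∞`. -/
def wlen {A : Type*} : LWord A → ℕ∞
  | .inl l => (l.length : ℕ∞)
  | .inr _ => (⊤ : ℕ∞)

/-- `α_{1,n}` : the initial subword of length `n`. -/
def wtake {A : Type*} : LWord A → ℕ → List A
  | .inl l, n => l.take n
  | .inr f, n => (List.range n).map f

/-- Concatenation of a finite word with a word. -/
def wappend {A : Type*} (α : List A) : LWord A → LWord A
  | .inl l => .inl (α ++ l)
  | .inr f => .inr fun n => if h : n < α.length then α.get ⟨n, h⟩ else f (n - α.length)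

namespace LabelledSpace

variable {V Edg A : Type*} (L : LabelledSpace V Edg A)

abbrev relR : Set V → List A → Set V := L.toLGraph.relR

abbrev IsLbl : List A → Prop := L.toLGraph.IsLbl

/-- `r(α)` : the range of a word. -/
def wr (α : List A) : Set V := L.relR Set.univ α

/-- Membership in `ℒ^{≤∞}(E)`. -/
def IsLWord : LWord A → Prop
  | .inl l => L.IsLbl l
  | .inr f => L.toLGraph.IsLblInf f

/-- Weakly left-resolving. -/
def WeaklyLeftResolving : Prop :=
  ∀ ⦃X Y : Set V⦄, X ∈ L.ℬ → Y ∈ L.ℬ → ∀ α : List A, α ≠ [] →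
    L.relR (X ∩ Y) α = L.relR X α ∩ L.relR Y α

/-- `ℬ` is closed under relative complements. -/
def ClosedUnderRelComplements : Prop :=
  ∀ ⦃X Y : Set V⦄, X ∈ L.ℬ → Y ∈ L.ℬ → X \ Y ∈ L.ℬ

/-- `ℬ_α = {A ∈ ℬ : A ⊆ r(α)}`. -/
def Bw (α : List A) : Set (Set V) := {X | X ∈ L.ℬ ∧ X ⊆ L.wr α}

/-- `X_α` : the set of ultrafilters in `ℬ_α`. -/
def Xw (α : List A) : Set (Set (Set V)) := {F | IsUltrafilterIn (L.Bw α) F}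

/-- `X_{(α)β} = {F ∈ X_β : r(αβ) ∈ F}`, with the convention `X_{(ω)β} = X_β`. -/
def XP (α β : List A) : Set (Set (Set V)) :=
  match α with
  | [] => L.Xw β
  | a :: l => {F | F ∈ L.Xw β ∧ L.wr ((a :: l) ++ β) ∈ F}

/-- `g_{(α)β}(F) = {C ∩ r(αβ) : C ∈ F}`. -/
def gmap (α β : List A) (F : Set (Set V)) : Set (Set V) :=
  {D | ∃ C ∈ F, D = C ∩ L.wr (α ++ β)}

/-- `h_{[α]β}(F)` : the upward closure of `F` in `ℬ_β` (only depends on `β`). -/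
def hmap (β : List A) (F : Set (Set V)) : Set (Set V) :=
  {D | D ∈ L.Bw β ∧ ∃ C ∈ F, C ⊆ D}

/-- `f_{β[γ]}(F) = {A ∈ ℬ_β : r(A,γ) ∈ F}`. -/
def fmap (β γ : List A) (F : Set (Set V)) : Set (Set V) :=
  {X | X ∈ L.Bw β ∧ L.relR X γ ∈ F}

/-- `X_α^{sink}`. -/
def Xsink (α : List A) : Set (Set (Set V)) :=
  {F | F ∈ L.Xw α ∧ ∀ b : A, ∃ X ∈ F, L.relR X [b] = ∅}

/-- A complete family (of filters) for the word `w`. -/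
def IsCompleteFamily (w : LWord A) (F : ℕ → Set (Set V)) : Prop :=
  (∀ n : ℕ, 0 < n → (n : ℕ∞) ≤ wlen w → IsFilterIn (L.Bw (wtake w n)) (F n)) ∧
  (IsFilterIn (L.Bw []) (F 0) ∨ F 0 = ∅) ∧
  ∀ n : ℕ, (n : ℕ∞) < wlen w →
    F n = {X | X ∈ L.Bw (wtake w n) ∧ L.relR X ((wtake w (n + 1)).drop n) ∈ F (n + 1)}

/-- A complete family of ultrafilters for the word `w`. -/
def IsCompleteUltraFamily (w : LWord A) (F : ℕ → Set (Set V)) : Prop :=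
  (∀ n : ℕ, 0 < n → (n : ℕ∞) ≤ wlen w → IsUltrafilterIn (L.Bw (wtake w n)) (F n)) ∧
  (IsUltrafilterIn (L.Bw []) (F 0) ∨ F 0 = ∅) ∧
  ∀ n : ℕ, (n : ℕ∞) < wlen w →
    F n = {X | X ∈ L.Bw (wtake w n) ∧ L.relR X ((wtake w (n + 1)).drop n) ∈ F (n + 1)}

/-- Membership in `E(S)`: `none` is the zero element, `some (α, X)` stands for `(α, X, α)`. -/
def ESmem : Option (List A × Set V) → Prop
  | none => True
  | some p => p.2 ∈ L.Bw p.1 ∧ p.2 ≠ ∅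

/-- `E(S) ∖ {0}`. -/
def ESnz : Set (Option (List A × Set V)) := {p | L.ESmem p ∧ p ≠ none}

/-- The natural order on `E(S)`: `(α,A,α) ≤ (β,B,β)` iff `α = βα'` and `A ⊆ r(B,α')`. -/
def ESle : Option (List A × Set V) → Option (List A × Set V) → Prop
  | none, _ => True
  | some _, none => False
  | some p, some q => ∃ γ : List A, p.1 = q.1 ++ γ ∧ p.2 ⊆ L.relR q.2 γ

open Classical in
/-- The product in the semilattice `E(S)`. -/
noncomputable def ESmul :
    Option (List A × Set V) → Option (List A × Set V) → Option (List A × Set V)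
  | none, _ => none
  | some _, none => none
  | some p, some q =>
    if p.1 <+: q.1 then
      if L.relR p.2 (q.1.drop p.1.length) ∩ q.2 = ∅ then none
      else some (q.1, L.relR p.2 (q.1.drop p.1.length) ∩ q.2)
    else if q.1 <+: p.1 then
      if p.2 ∩ L.relR q.2 (p.1.drop q.1.length) = ∅ then none
      else some (p.1, p.2 ∩ L.relR q.2 (p.1.drop q.1.length))
    else none

/-- A filter in `E(S)`. -/
def IsESFilter (ξ : Set (Option (List A × Set V))) : Prop :=
  ξ ⊆ L.ESnz ∧ ξ.Nonempty ∧
    (∀ p ∈ ξ, ∀ q, L.ESmem q → L.ESle p q → q ∈ ξ) ∧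
    (∀ p ∈ ξ, ∀ q ∈ ξ, ∃ z ∈ ξ, L.ESle z p ∧ L.ESle z q)

/-- `Z` is a cover for `x` in `E(S)`. -/
def ESCover (x : Option (List A × Set V)) (Z : Set (Option (List A × Set V))) : Prop :=
  (∀ z ∈ Z, L.ESmem z ∧ L.ESle z x) ∧
  ∀ y, L.ESmem y → y ≠ none → L.ESle y x → ∃ z ∈ Z, L.ESmul y z ≠ none

/-- A tight filter in `E(S)`: every finite cover of an element of the filter meets the filter. -/
def IsTightESFilter (ξ : Set (Option (List A × Set V))) : Prop :=
  L.IsESFilter ξ ∧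
    ∀ x ∈ ξ, ∀ Z : Set (Option (List A × Set V)), Z.Finite → L.ESCover x Z →
      (Z ∩ ξ).Nonempty

/-- The filter in `E(S)` associated with the pair `(w, F)` of a word together with a
(complete) family: `ξ = ⋃_n ⋃_{X ∈ F n} ↑(w_{1,n}, X)`. -/
def filterOf (w : LWord A) (F : ℕ → Set (Set V)) : Set (Option (List A × Set V)) :=
  {p | L.ESmem p ∧
    ∃ n : ℕ, (n : ℕ∞) ≤ wlen w ∧ ∃ X ∈ F n, L.ESle (some (wtake w n, X)) p}

/-- `ξ_n = {X : (w_{1,n}, X, w_{1,n}) ∈ ξ}`. -/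
def xiN (_L : LabelledSpace V Edg A) (w : LWord A) (ξ : Set (Option (List A × Set V)))
    (n : ℕ) : Set (Set V) :=
  {X | some (wtake w n, X) ∈ ξ}

/-- `T_w` : the tight filters in `E(S)` whose associated word is `w`. -/
def Tw (w : LWord A) : Set (Set (Option (List A × Set V))) :=
  {ξ | L.IsTightESFilter ξ ∧
    ∃ F : ℕ → Set (Set V), L.IsCompleteFamily w F ∧ ξ = L.filterOf w F}

/-- `T_{(α)w} = {ξ ∈ T_w : ξ₀ is an ultrafilter in ℬ with r(α) ∈ ξ₀}`, with
`T_{(ω)w} = T_w`. -/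
def TwP (α : List A) (w : LWord A) : Set (Set (Option (List A × Set V))) :=
  match α with
  | [] => L.Tw w
  | a :: l =>
    {ξ | ξ ∈ L.Tw w ∧ IsUltrafilterIn (L.Bw []) (L.xiN w ξ 0) ∧ L.wr (a :: l) ∈ L.xiN w ξ 0}

/-- The family `{J_i}` for `αw` built from a family `{F_n}` for `w`:
`J_{|α|+n} = g_{(α)w_{1,n}}(F_n)` for `1 ≤ n ≤ |w|` and
`J_i = f_{α_{1,i}[α_{i+1,|α|}w₁]}(J_{|α|+1})` for `0 ≤ i ≤ |α|`
(reading `J_{|α|} = g_{(α)ω}(F₀)` and `J_i = f_{α_{1,i}[α_{i+1,|α|}]}(J_{|α|})` when `w = ω`). -/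
def Jfamily (α : List A) (w : LWord A) (F : ℕ → Set (Set V)) : ℕ → Set (Set V) :=
  match w with
  | .inl [] => fun i =>
      if i < α.length then L.fmap (α.take i) (α.drop i) (L.gmap α [] (F 0))
      else L.gmap α [] (F 0)
  | w => fun i =>
      if i ≤ α.length then
        L.fmap (α.take i) (α.drop i ++ wtake w 1) (L.gmap α (wtake w 1) (F 1))
      else L.gmap α (wtake w (i - α.length)) (F (i - α.length))

/-- `G_{(α)w}` as an operation on filters in `E(S)`. -/
def Gmap (α : List A) (w : LWord A) (ξ : Set (Option (List A × Set V))) :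
    Set (Option (List A × Set V)) :=
  L.filterOf (wappend α w) (L.Jfamily α w (L.xiN w ξ))

/-- The family `{η_n}` for `w` built from a family for `αw`:
`η_n = h_{[α]w_{1,n}}(F_{|α|+n})`. -/
def Hfam (α : List A) (w : LWord A) (F : ℕ → Set (Set V)) : ℕ → Set (Set V) :=
  fun n => L.hmap (wtake w n) (F (α.length + n))

/-- `H_{[α]w}` as an operation on filters in `E(S)`. -/
def Hmap (α : List A) (w : LWord A) (ξ : Set (Option (List A × Set V))) :
    Set (Option (List A × Set V)) :=
  L.filterOf w (L.Hfam α w (L.xiN (wappend α w) ξ))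

end LabelledSpace

/-- The topology of pointwise convergence on sets of subsets of `V`
(product topology with discrete coordinates, via indicator functions). -/
def memTopology (V : Type*) : TopologicalSpace (Set (Set V)) :=
  show TopologicalSpace (Set V → Prop) from
    @Pi.topologicalSpace (Set V) (fun _ => Prop) (fun _ => ⊥)



section Lemmas
variable {V Edg A : Type*} (L : LabelledSpace V Edg A)

namespace LabelledSpace

theorem relR_nil (S : Set V) : L.relR S [] = S := rfl

theorem relR_mono {S T : Set V} (h : S ⊆ T) : ∀ γ : List A, L.relR S γ ⊆ L.relR T γ
  | [] => h
  | _ :: _ => fun _ ⟨p, hp, hl, hne, hs, hr⟩ => ⟨p, hp, hl, hne, h hs, hr⟩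

theorem relR_empty : ∀ γ : List A, L.relR (∅ : Set V) γ = ∅
  | [] => rfl
  | a :: γ' => by
      ext v
      simp only [LGraph.relR, Set.mem_setOf_eq, Set.mem_empty_iff_false, iff_false]
      rintro ⟨p, hp, hl, hne, hs, hr⟩
      exact hs

theorem relR_comp (S : Set V) (γ δ : List A) :
    L.relR S (γ ++ δ) = L.relR (L.relR S γ) δ := by
  rcases γ with _ | ⟨a, γ'⟩
  · rfl
  rcases δ with _ | ⟨b, δ'⟩
  · rw [List.append_nil]; rfl
  ext v
  constructor
  · rintro ⟨p, hp, hl, hne, hs, hr⟩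
    have hl' : List.map L.lbl p = (a :: γ') ++ (b :: δ') := hl
    rw [List.map_eq_append_iff] at hl'
    obtain ⟨p₁, p₂, rfl, hl₁, hl₂⟩ := hl'
    have hne₁ : p₁ ≠ [] := by rintro rfl; simp at hl₁
    have hne₂ : p₂ ≠ [] := by rintro rfl; simp at hl₂
    rw [LGraph.IsPath, List.Chain', List.isChain_append] at hp
    obtain ⟨hc₁, hc₂, hcj⟩ := hp
    refine ⟨p₂, hc₂, hl₂, hne₂, ?_, ?_⟩
    · refine ⟨p₁, hc₁, hl₁, hne₁, ?_, ?_⟩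
      · rw [List.head_append_of_ne_nil hne₁] at hs; exact hs
      · exact hcj _ (List.getLast?_eq_getLast hne₁ ▸ rfl) _
          (List.head?_eq_head hne₂ ▸ rfl)
    · rw [List.getLast_append_of_ne_nil _ hne₂] at hr; exact hr
  · rintro ⟨q, hq, hlq, hneq, ⟨p₁, hp₁, hl₁, hne₁, hs₁, hr₁⟩, hrq⟩
    have hne : p₁ ++ q ≠ [] := by simp [hne₁]
    refine ⟨p₁ ++ q, ?_, ?_, hne, ?_, ?_⟩
    · rw [LGraph.IsPath, List.Chain', List.isChain_append]
      refine ⟨hp₁, hq, ?_⟩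
      intro x hx y hy
      rw [List.getLast?_eq_getLast hne₁, Option.mem_some_iff] at hx
      rw [List.head?_eq_head hneq, Option.mem_some_iff] at hy
      rw [← hx, ← hy, hr₁]
    · rw [List.map_append, hl₁, hlq]; rfl
    · rw [List.head_append_of_ne_nil hne₁]; exact hs₁
    · rw [List.getLast_append_of_ne_nil _ hneq]; exact hrq

theorem relR_eq_empty {S : Set V} (h : S = ∅) (γ : List A) : L.relR S γ = ∅ := by
  rw [h, relR_empty]

theorem relR_subset_wr (S : Set V) (γ : List A) : L.relR S γ ⊆ L.wr γ :=
  L.relR_mono (Set.subset_univ S) γ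

theorem wr_append (β δ : List A) : L.wr (β ++ δ) = L.relR (L.wr β) δ :=
  L.relR_comp Set.univ β δ

theorem wr_append_subset (β δ : List A) : L.wr (β ++ δ) ⊆ L.wr δ := by
  rw [wr_append]; exact L.relR_subset_wr _ δ

theorem isLbl_nil : L.IsLbl ([] : List A) := ⟨[], List.isChain_nil, rfl⟩

theorem isLbl_take {γ : List A} (h : L.IsLbl γ) (n : ℕ) : L.IsLbl (γ.take n) := by
  obtain ⟨p, hp, hl⟩ := h
  exact ⟨p.take n, hp.take n, by rw [List.map_take, hl]⟩

theorem isLbl_drop {γ : List A} (h : L.IsLbl γ) (n : ℕ) : L.IsLbl (γ.drop n) := by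
  obtain ⟨p, hp, hl⟩ := h
  exact ⟨p.drop n, hp.drop n, by rw [List.map_drop, hl]⟩

theorem isLbl_of_wr_nonempty {γ : List A} (h : (L.wr γ).Nonempty) : L.IsLbl γ := by
  rcases γ with _ | ⟨a, γ'⟩
  · exact L.isLbl_nil
  obtain ⟨v, p, hp, hl, _, _⟩ := h
  exact ⟨p, hp, hl⟩

theorem isLbl_of_relR_nonempty {S : Set V} {γ : List A} (hγ : γ ≠ [])
    (h : (L.relR S γ).Nonempty) : L.IsLbl γ := by
  rcases γ with _ | ⟨a, γ'⟩
  · exact absurd rfl hγ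
  obtain ⟨v, p, hp, hl, _, _⟩ := h
  exact ⟨p, hp, hl⟩

end LabelledSpace
end Lemmas

section Lemmas2
variable {V Edg A : Type*} (L : LabelledSpace V Edg A)

theorem wtake_zero (w : LWord A) : wtake w 0 = [] := by
  cases w <;> simp [wtake]

theorem wtake_length_of_le {w : LWord A} {n : ℕ} (h : (n : ℕ∞) ≤ wlen w) :
    (wtake w n).length = n := by
  cases w with
  | inl l =>
    have : n ≤ l.length := by simp only [wlen] at h; exact_mod_cast h
    simp [wtake, this]
  | inr f => simp [wtake]

theorem wtake_length_le (w : LWord A) (n : ℕ) :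
    ((wtake w n).length : ℕ∞) ≤ wlen w := by
  cases w with
  | inl l =>
    simp only [wtake, wlen, List.length_take, Nat.cast_le]
    omega
  | inr f => simp [wlen]

theorem wtake_take (w : LWord A) (m n : ℕ) :
    (wtake w n).take m = wtake w (min m n) := by
  cases w with
  | inl l => simp [wtake, List.take_take]
  | inr f => simp [wtake, ← List.map_take, List.take_range]

theorem wtake_wtake_length (w : LWord A) (n : ℕ) :
    wtake w ((wtake w n).length) = wtake w n := by
  cases w with
  | inl l =>
    simp only [wtake, List.length_take]
    rw [List.take_eq_take_iff]
    omega
  | inr f => simp [wtake]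

theorem wtake_append_drop {w : LWord A} {m n : ℕ} (h : m ≤ n) :
    wtake w m ++ (wtake w n).drop m = wtake w n := by
  have : (wtake w n).take m = wtake w m := by rw [wtake_take, min_eq_left h]
  rw [← this, List.take_append_drop]

theorem wtake_drop_append {w : LWord A} {m j k : ℕ} (hmj : m ≤ j) (hjk : j ≤ k)
    (hj : (j : ℕ∞) ≤ wlen w) :
    (wtake w j).drop m ++ (wtake w k).drop j = (wtake w k).drop m := by
  have h1 : wtake w j ++ (wtake w k).drop j = wtake w k := wtake_append_drop hjk
  have h2 : m ≤ (wtake w j).length := by rw [wtake_length_of_le hj]; exact hmj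
  conv_rhs => rw [← h1]
  rw [List.drop_append_of_le_length h2]

theorem wlen_wappend (α : List A) (w : LWord A) :
    wlen (wappend α w) = (α.length : ℕ∞) + wlen w := by
  cases w with
  | inl l => simp [wappend, wlen, Nat.cast_add]
  | inr f => simp [wappend, wlen]

theorem wtake_wappend (α : List A) (w : LWord A) (n : ℕ) :
    wtake (wappend α w) (α.length + n) = α ++ wtake w n := by
  cases w with
  | inl l => simp [wappend, wtake, List.take_append]
  | inr f =>
    induction n with
    | zero =>
      simp only [Nat.add_zero, wtake_zero, List.append_nil, wappend, wtake]
      apply List.ext_getElem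
      · simp
      · intro i h1 h2
        simp only [List.getElem_map, List.getElem_range]
        have : i < α.length := by simpa using h1
        simp [this]
    | succ n ih =>
      have hr : ∀ (g : ℕ → A) (k : ℕ), wtake (Sum.inr g : LWord A) (k+1)
          = wtake (Sum.inr g : LWord A) k ++ [g k] := by
        intro g k
        simp [wtake, List.range_succ]
      rw [show α.length + (n+1) = (α.length + n) + 1 from rfl]
      rw [show wtake (wappend α (Sum.inr f)) (α.length + n + 1)
        = wtake (wappend α (Sum.inr f)) (α.length + n) ++
          [(fun i => if h : i < α.length then α.get ⟨i, h⟩ else f (i - α.length)) (α.length + n)]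
        from hr _ _]
      rw [ih, hr f n]
      have : ¬ (α.length + n < α.length) := by omega
      simp [this]

theorem isLbl_wtake {w : LWord A} (hw : L.IsLWord w) (n : ℕ) : L.IsLbl (wtake w n) := by
  cases w with
  | inl l => exact L.isLbl_take hw n
  | inr f =>
    obtain ⟨p, hp, hl⟩ := hw
    refine ⟨(List.range n).map p, ?_, ?_⟩
    · rw [LGraph.IsPath, List.Chain', List.isChain_map]
      cases n with
      | zero => simp
      | succ k =>
        rw [List.isChain_range_succ]
        intro m _
        exact hp m
    · rw [wtake, List.map_map]
      congr 1
      ext i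
      exact hl i

theorem isLbl_seg {w : LWord A} (hw : L.IsLWord w) (m n : ℕ) :
    L.IsLbl ((wtake w n).drop m) :=
  L.isLbl_drop (isLbl_wtake L hw n) m

end Lemmas2

section Lemmas3
variable {V Edg A : Type*} {L : LabelledSpace V Edg A}

theorem wtake_length_le' (w : LWord A) (n : ℕ) : (wtake w n).length ≤ n := by
  cases w with
  | inl l => simp only [wtake, List.length_take]; omega
  | inr f => simp [wtake]

theorem seg_self (w : LWord A) (m : ℕ) : (wtake w m).drop m = [] :=
  List.drop_eq_nil_of_le (wtake_length_le' w m)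

theorem enat_lt_of_succ_le {n : ℕ} {c : ℕ∞} (h : ((n+1 : ℕ) : ℕ∞) ≤ c) : (n : ℕ∞) < c :=
  lt_of_lt_of_le (by exact_mod_cast Nat.lt_succ_self n) h

theorem enat_le_of_succ_le {n : ℕ} {c : ℕ∞} (h : ((n+1 : ℕ) : ℕ∞) ≤ c) : (n : ℕ∞) ≤ c :=
  (enat_lt_of_succ_le h).le

theorem Bw_append_subset (β δ : List A) : L.Bw (β ++ δ) ⊆ L.Bw δ :=
  fun _ hX => ⟨hX.1, hX.2.trans (L.wr_append_subset β δ)⟩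

theorem relR_mem_Bw {w : LWord A} (hw : L.IsLWord w) {m n : ℕ} (hmn : m ≤ n)
    {X : Set V} (hX : X ∈ L.Bw (wtake w m)) :
    L.relR X ((wtake w n).drop m) ∈ L.Bw (wtake w n) := by
  constructor
  · exact L.relR_mem hX.1 _ (isLbl_seg L hw m n)
  · calc L.relR X ((wtake w n).drop m)
        ⊆ L.relR (L.wr (wtake w m)) ((wtake w n).drop m) := L.relR_mono hX.2 _
      _ = L.wr (wtake w m ++ (wtake w n).drop m) := (L.wr_append _ _).symm
      _ = L.wr (wtake w n) := by rw [wtake_append_drop hmn]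

namespace LabelledSpace

theorem IsCompleteFamily.filter_of_nonempty {u : LWord A} {F : ℕ → Set (Set V)}
    (hF : L.IsCompleteFamily u F) {n : ℕ} (hn : (n : ℕ∞) ≤ wlen u)
    (hne : (F n).Nonempty) : IsFilterIn (L.Bw (wtake u n)) (F n) := by
  rcases Nat.eq_zero_or_pos n with rfl | hpos
  · rw [wtake_zero]
    rcases hF.2.1 with h | h
    · exact h
    · rw [h] at hne; exact absurd hne Set.not_nonempty_empty
  · exact hF.1 n hpos hn

theorem IsCompleteFamily.ascend {u : LWord A} {F : ℕ → Set (Set V)}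
    (hF : L.IsCompleteFamily u F) {m n : ℕ} (hmn : m ≤ n) (hn : (n : ℕ∞) ≤ wlen u)
    {X : Set V} (hX : X ∈ F m) :
    L.relR X ((wtake u n).drop m) ∈ F n := by
  induction n, hmn using Nat.le_induction with
  | base => rw [seg_self, L.relR_nil]; exact hX
  | succ n hmn ih =>
    have hn' : (n : ℕ∞) ≤ wlen u := enat_le_of_succ_le hn
    have hlt : (n : ℕ∞) < wlen u := enat_lt_of_succ_le hn
    have h1 := ih hn'
    have h2 := hF.2.2 n hlt
    rw [h2] at h1
    have h3 := h1.2
    rwa [← L.relR_comp, wtake_drop_append hmn (Nat.le_succ n) hn'] at h3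

theorem IsCompleteFamily.descend {u : LWord A} {F : ℕ → Set (Set V)}
    (hu : L.IsLWord u) (hF : L.IsCompleteFamily u F) {m n : ℕ} (hmn : m ≤ n)
    (hn : (n : ℕ∞) ≤ wlen u) {X : Set V} (hX : X ∈ L.Bw (wtake u m))
    (h : L.relR X ((wtake u n).drop m) ∈ F n) : X ∈ F m := by
  obtain ⟨k, rfl⟩ := Nat.exists_eq_add_of_le hmn
  clear hmn
  induction k with
  | zero => rw [Nat.add_zero, seg_self, L.relR_nil] at h; exact h
  | succ k ih =>
    have hn' : ((m + k : ℕ) : ℕ∞) ≤ wlen u := by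
      apply enat_le_of_succ_le; rw [show m+k+1 = m+(k+1) from rfl]; exact hn
    have hlt : ((m + k : ℕ) : ℕ∞) < wlen u := by
      apply enat_lt_of_succ_le; rw [show m+k+1 = m+(k+1) from rfl]; exact hn
    apply ih hn'
    rw [hF.2.2 (m+k) hlt]
    refine ⟨relR_mem_Bw hu (Nat.le_add_right m k) hX, ?_⟩
    rw [← L.relR_comp,
      wtake_drop_append (Nat.le_add_right m k) (Nat.le_succ _) hn']
    rw [show m+k+1 = m+(k+1) from rfl]
    exact h

end LabelledSpace
end Lemmas3

section Lemmas4
variable {V Edg A : Type*} {L : LabelledSpace V Edg A}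

namespace LabelledSpace

theorem ESle_some_iff {p q : List A × Set V} :
    L.ESle (some p) (some q) ↔ ∃ γ : List A, p.1 = q.1 ++ γ ∧ p.2 ⊆ L.relR q.2 γ :=
  Iff.rfl

theorem ESle_refl (p : List A × Set V) : L.ESle (some p) (some p) :=
  ⟨[], (List.append_nil _).symm, subset_rfl⟩

theorem ESle_trans {p q r : Option (List A × Set V)} (hpq : L.ESle p q)
    (hqr : L.ESle q r) : L.ESle p r := by
  match p, q, r with
  | none, _, _ => trivial
  | some p, none, _ => exact absurd hpq not_false
  | some p, some q, none => exact absurd hqr not_false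
  | some p, some q, some r =>
    obtain ⟨γ₁, h1, h1'⟩ := hpq
    obtain ⟨γ₂, h2, h2'⟩ := hqr
    refine ⟨γ₂ ++ γ₁, by rw [h1, h2, List.append_assoc], ?_⟩
    calc p.2 ⊆ L.relR q.2 γ₁ := h1'
      _ ⊆ L.relR (L.relR r.2 γ₂) γ₁ := L.relR_mono h2' γ₁
      _ = L.relR r.2 (γ₂ ++ γ₁) := (L.relR_comp _ _ _).symm

theorem hmap_filter {P G : Set (Set V)} {β : List A} (hG : IsFilterIn P G)
    (hsub : G ⊆ L.Bw β) : IsFilterIn (L.Bw β) (L.hmap β G) := by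
  obtain ⟨-, ⟨C₀, hC₀⟩, hemp, -, hdir⟩ := hG
  refine ⟨fun D hD => hD.1, ⟨C₀, hsub hC₀, C₀, hC₀, subset_rfl⟩, ?_, ?_, ?_⟩
  · rintro ⟨-, C, hC, hCsub⟩
    rw [Set.subset_empty_iff] at hCsub
    exact hemp (hCsub ▸ hC)
  · rintro X ⟨-, C, hC, hCX⟩ Y hY hXY
    exact ⟨hY, C, hC, hCX.trans hXY⟩
  · rintro X ⟨hX, C₁, hC₁, h1⟩ Y ⟨hY, C₂, hC₂, h2⟩
    obtain ⟨C, hC, hCC₁, hCC₂⟩ := hdir C₁ hC₁ C₂ hC₂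
    refine ⟨X ∩ Y, ⟨⟨L.inter_mem hX.1 hY.1, Set.inter_subset_left.trans hX.2⟩,
      C, hC, Set.subset_inter (hCC₁.trans h1) (hCC₂.trans h2)⟩,
      Set.inter_subset_left, Set.inter_subset_right⟩

theorem mem_filterOf_iff {u : LWord A} {F : ℕ → Set (Set V)} (hu : L.IsLWord u)
    (hF : L.IsCompleteFamily u F) {ν : List A} {X : Set V} :
    some (ν, X) ∈ L.filterOf u F ↔
      ((ν.length : ℕ∞) ≤ wlen u ∧ ν = wtake u ν.length ∧ X ∈ F ν.length) := by
  constructor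
  · rintro ⟨hmem, n, hn, X₀, hX₀, γ, hγ, hγ'⟩
    dsimp only at hγ hγ'
    have hlen : ν.length ≤ (wtake u n).length := by
      rw [hγ, List.length_append]; omega
    have hνwlen : ((ν.length : ℕ) : ℕ∞) ≤ wlen u :=
      le_trans (by exact_mod_cast hlen) (wtake_length_le u n)
    have hνn : ν.length ≤ n := hlen.trans (wtake_length_le' u n)
    have hν : ν = wtake u ν.length := by
      have h5 : (wtake u n).take ν.length = ν := by rw [hγ, List.take_left]
      conv_lhs => rw [← h5]
      rw [wtake_take, min_eq_left hνn]
    have hγeq : γ = (wtake u n).drop ν.length := by rw [hγ, List.drop_left]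
    have hXBw : X ∈ L.Bw (wtake u ν.length) := by rw [← hν]; exact hmem.1
    have hfil : IsFilterIn (L.Bw (wtake u n)) (F n) :=
      hF.filter_of_nonempty hn ⟨X₀, hX₀⟩
    have hrel : L.relR X γ ∈ F n := by
      refine hfil.2.2.2.1 X₀ hX₀ _ ?_ hγ'
      rw [hγeq]
      exact relR_mem_Bw hu hνn hXBw
    refine ⟨hνwlen, hν, ?_⟩
    apply hF.descend hu hνn hn hXBw
    rw [← hγeq]; exact hrel
  · rintro ⟨hlen, hν, hXF⟩
    have hfil : IsFilterIn (L.Bw (wtake u ν.length)) (F ν.length) :=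
      hF.filter_of_nonempty hlen ⟨X, hXF⟩
    have hXBw : X ∈ L.Bw ν := by rw [hν]; exact hfil.1 hXF
    have hXne : X ≠ ∅ := by rintro rfl; exact hfil.2.2.1 hXF
    refine ⟨⟨hXBw, hXne⟩, ν.length, hlen, X, hXF, ⟨[], ?_, ?_⟩⟩
    · rw [← hν, List.append_nil]
    · rw [L.relR_nil]

open Classical in
theorem ESmul_some_some (L : LabelledSpace V Edg A) (p q : List A × Set V) :
    L.ESmul (some p) (some q) =
      if p.1 <+: q.1 then
        if L.relR p.2 (q.1.drop p.1.length) ∩ q.2 = ∅ then none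
        else some (q.1, L.relR p.2 (q.1.drop p.1.length) ∩ q.2)
      else if q.1 <+: p.1 then
        if p.2 ∩ L.relR q.2 (p.1.drop q.1.length) = ∅ then none
        else some (p.1, p.2 ∩ L.relR q.2 (p.1.drop q.1.length))
      else none := rfl

theorem ESmul_some_none (L : LabelledSpace V Edg A) (p : List A × Set V) :
    L.ESmul (some p) none = none := rfl

end LabelledSpace
end Lemmas4

section
variable {V Edg A : Type*} (L : LabelledSpace V Edg A)

/-- For `ξ ∈ T_{αβ}`, the filter in `E(S)` with word `β` associated with the complete
family `{h_{[α]β_{1,n}}(ξ_{|α|+n})}` is a tight filter. -/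
theorem cut_filter_tight (hwlr : L.WeaklyLeftResolving)
    (hc : L.ClosedUnderRelComplements)
    (α : List A) (hα : α ≠ []) (hαl : L.IsLbl α)
    (w : LWord A) (hw : L.IsLWord w) (hαw : L.IsLWord (wappend α w))
    (ξ : Set (Option (List A × Set V))) (hξ : ξ ∈ L.Tw (wappend α w)) :
    L.IsCompleteFamily w (L.Hfam α w (L.xiN (wappend α w) ξ)) ∧
    L.IsTightESFilter (L.filterOf w (L.Hfam α w (L.xiN (wappend α w) ξ))) := by
  classical
  obtain ⟨hT, F, hF, hξeq⟩ := hξ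
  set u := wappend α w with hu
  set a := α.length with ha
  have hapos : 0 < a := List.length_pos_iff.mpr hα
  have hlenu : wlen u = (a : ℕ∞) + wlen w := wlen_wappend α w
  have hane : (a : ℕ∞) ≠ ⊤ := WithTop.natCast_ne_top a
  have hle_u : ∀ {n : ℕ}, (n : ℕ∞) ≤ wlen w → ((a + n : ℕ) : ℕ∞) ≤ wlen u := by
    intro n hn
    rw [hlenu]; push_cast
    exact add_le_add_right hn _
  have hxiN : ∀ k : ℕ, (k : ℕ∞) ≤ wlen u → L.xiN u ξ k = F k := by
    intro k hk
    ext X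
    show some (wtake u k, X) ∈ ξ ↔ X ∈ F k
    rw [hξeq, LabelledSpace.mem_filterOf_iff hαw hF, wtake_length_of_le hk]
    simp [hk]
  set H := L.Hfam α w (L.xiN u ξ) with hH
  have hHeq : ∀ n : ℕ, (n : ℕ∞) ≤ wlen w →
      H n = L.hmap (wtake w n) (F (a + n)) := by
    intro n hn
    show L.hmap (wtake w n) (L.xiN u ξ (α.length + n)) = _
    rw [← ha, hxiN (a + n) (hle_u hn)]
  have hFfil : ∀ n : ℕ, (n : ℕ∞) ≤ wlen w →
      IsFilterIn (L.Bw (wtake u (a + n))) (F (a + n)) := by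
    intro n hn
    exact hF.1 (a + n) (by omega) (hle_u hn)
  have hwtu : ∀ n : ℕ, wtake u (a + n) = α ++ wtake w n := fun n => wtake_wappend α w n
  have hFsubBw : ∀ n : ℕ, (n : ℕ∞) ≤ wlen w → F (a + n) ⊆ L.Bw (wtake w n) := by
    intro n hn C hC
    have := (hFfil n hn).1 hC
    rw [hwtu n] at this
    exact Bw_append_subset α (wtake w n) this
  have hHfil : ∀ n : ℕ, (n : ℕ∞) ≤ wlen w →
      IsFilterIn (L.Bw (wtake w n)) (H n) := by
    intro n hn
    rw [hHeq n hn]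
    exact LabelledSpace.hmap_filter (hFfil n hn) (hFsubBw n hn)
  -- the segment identity
  have hseg : ∀ n : ℕ, (n : ℕ∞) < wlen w →
      (wtake u (a + n + 1)).drop (a + n) = (wtake w (n + 1)).drop n := by
    intro n hn
    rw [show a + n + 1 = a + (n + 1) from rfl, hwtu (n + 1), List.drop_append, List.drop_eq_nil_of_le (by omega), List.nil_append]
    congr 1; omega
  have hHc : L.IsCompleteFamily w H := by
    refine ⟨fun n _ hn => hHfil n hn, Or.inl ?_, ?_⟩
    · have h0 := hHfil 0 zero_le
      rwa [wtake_zero] at h0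
    · intro n hn
      have hn1 : ((n + 1 : ℕ) : ℕ∞) ≤ wlen w := by
        push_cast
        exact (ENat.add_one_le_iff (by simp)).mpr hn
      have hn' : (n : ℕ∞) ≤ wlen w := enat_le_of_succ_le hn1
      have hultlen : ((a + n : ℕ) : ℕ∞) < wlen u := by
        rw [hlenu]; push_cast
        exact WithTop.add_lt_add_left hane hn
      have hFrec := hF.2.2 (a + n) hultlen
      have hletterne : (wtake w (n + 1)).drop n ≠ [] := by
        have : ((wtake w (n + 1)).drop n).length = 1 := by
          rw [List.length_drop, wtake_length_of_le hn1]; omega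
        intro hcon; rw [hcon] at this; simp at this
      ext X
      rw [hHeq n hn', hHeq (n + 1) hn1]
      constructor
      · rintro ⟨hXBw, C, hC, hCX⟩
        refine ⟨hXBw, ?_⟩
        rw [hFrec] at hC
        have hC2 := hC.2
        rw [hseg n hn] at hC2
        exact ⟨relR_mem_Bw hw (Nat.le_succ n) hXBw, L.relR C _, hC2,
          L.relR_mono hCX _⟩
      · rintro ⟨hXBw, hrBw, C', hC', hC'sub⟩
        have hRlbl : L.IsLbl (α ++ wtake w n) := by
          have := isLbl_wtake L hαw (a + n)
          rwa [hwtu n] at this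
        have hRmem : L.wr (α ++ wtake w n) ∈ L.ℬ :=
          L.range_mem _ (by simp [hα]) hRlbl
        set R := L.wr (α ++ wtake w n) with hR
        set C := X ∩ R with hCdef
        have hCmem : C ∈ L.ℬ := L.inter_mem hXBw.1 hRmem
        have hCBw : C ∈ L.Bw (wtake u (a + n)) := by
          rw [hwtu n]; exact ⟨hCmem, Set.inter_subset_right⟩
        have hwtw : wtake w n ++ (wtake w (n + 1)).drop n = wtake w (n + 1) :=
          wtake_append_drop (Nat.le_succ n)
        have hcomp : L.relR C ((wtake w (n + 1)).drop n) =
            L.relR X ((wtake w (n + 1)).drop n) ∩ L.wr (α ++ wtake w (n + 1)) := by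
          rw [hCdef, hwlr hXBw.1 hRmem _ hletterne]
          congr 1
          rw [hR, ← L.wr_append, List.append_assoc, hwtw]
        have hC'Bw : C' ∈ L.Bw (wtake u (a + n + 1)) := (hFfil (n+1) hn1).1 hC'
        have hC'sub2 : C' ⊆ L.relR C ((wtake w (n + 1)).drop n) := by
          rw [hcomp]
          refine Set.subset_inter hC'sub ?_
          have := hC'Bw.2
          rwa [show a + n + 1 = a + (n + 1) from rfl, hwtu (n + 1)] at this
        have hrelC : L.relR C ((wtake w (n + 1)).drop n) ∈ L.Bw (wtake u (a + n + 1)) := by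
          refine ⟨L.relR_mem hCmem _ (isLbl_seg L hw n (n + 1)), ?_⟩
          rw [hcomp, show a + n + 1 = a + (n + 1) from rfl, hwtu (n + 1)]
          exact Set.inter_subset_right
        have hrelCF : L.relR C ((wtake w (n + 1)).drop n) ∈ F (a + n + 1) :=
          (hFfil (n + 1) hn1).2.2.2.1 C' hC' _
            (by rwa [show a + n + 1 = a + (n + 1) from rfl] at hrelC) hC'sub2
        have hCF : C ∈ F (a + n) := by
          rw [hFrec]
          refine ⟨hCBw, ?_⟩
          rw [hseg n hn]
          exact hrelCF
        exact ⟨hXBw, C, hCF, Set.inter_subset_left⟩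
  have hmemη : ∀ (ν : List A) (X : Set V), some (ν, X) ∈ L.filterOf w H ↔
      ((ν.length : ℕ∞) ≤ wlen w ∧ ν = wtake w ν.length ∧ X ∈ H ν.length) :=
    fun ν X => LabelledSpace.mem_filterOf_iff hw hHc
  have hηsub : L.filterOf w H ⊆ L.ESnz := by
    rintro p ⟨hpm, n, hn, X0, hX0, hle⟩
    match p with
    | none => exact hle.elim
    | some p => exact ⟨hpm, by simp⟩
  have hkey : ∀ (m n : ℕ) (X Y : Set V), m ≤ n → (n : ℕ∞) ≤ wlen w → X ∈ H m →
      Y ∈ H n → ∃ W ∈ H n, W ⊆ L.relR X ((wtake w n).drop m) ∧ W ⊆ Y := by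
    intro m n X Y hmn hn hX hY
    exact (hHfil n hn).2.2.2.2 _ (hHc.ascend hmn hn hX) Y hY
  have hmemη' : ∀ (m : ℕ) (W : Set V), (m : ℕ∞) ≤ wlen w → W ∈ H m →
      some (wtake w m, W) ∈ L.filterOf w H := by
    intro m W hm hW
    rw [hmemη, wtake_length_of_le hm]
    exact ⟨hm, rfl, hW⟩
  have hηfil : L.IsESFilter (L.filterOf w H) := by
    refine ⟨hηsub, ?_, ?_, ?_⟩
    · obtain ⟨X, hX⟩ := (hHfil 0 zero_le).2.1
      exact ⟨some (wtake w 0, X), hmemη' 0 X zero_le hX⟩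
    · rintro p ⟨hpm, n, hn, X0, hX0, hle⟩ q hqm hpq
      exact ⟨hqm, n, hn, X0, hX0, LabelledSpace.ESle_trans hle hpq⟩
    · intro p hp q hq
      have hpne := (hηsub hp).2
      have hqne := (hηsub hq).2
      match p, q with
      | some (ν, X), some (ρ, Y) =>
        rw [hmemη] at hp hq
        obtain ⟨hν1, hν2, hν3⟩ := hp
        obtain ⟨hρ1, hρ2, hρ3⟩ := hq
        obtain ⟨m, hm, rfl⟩ : ∃ m : ℕ, (m : ℕ∞) ≤ wlen w ∧ ν = wtake w m :=
          ⟨ν.length, hν1, hν2⟩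
        obtain ⟨n, hn, rfl⟩ : ∃ n : ℕ, (n : ℕ∞) ≤ wlen w ∧ ρ = wtake w n :=
          ⟨ρ.length, hρ1, hρ2⟩
        rw [wtake_length_of_le hm] at hν3
        rw [wtake_length_of_le hn] at hρ3
        rcases le_total m n with hmn | hmn
        · obtain ⟨W, hW, h1, h2⟩ := hkey m n X Y hmn hn hν3 hρ3
          refine ⟨some (wtake w n, W), hmemη' n W hn hW, ?_, ?_⟩
          · exact ⟨(wtake w n).drop m, (wtake_append_drop hmn).symm, h1⟩
          · exact ⟨[], (List.append_nil _).symm, by rw [L.relR_nil]; exact h2⟩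
        · obtain ⟨W, hW, h1, h2⟩ := hkey n m Y X hmn hm hρ3 hν3
          refine ⟨some (wtake w m, W), hmemη' m W hm hW, ?_, ?_⟩
          · exact ⟨[], (List.append_nil _).symm, by rw [L.relR_nil]; exact h2⟩
          · exact ⟨(wtake w m).drop n, (wtake_append_drop hmn).symm, h1⟩
  refine ⟨hHc, hηfil, ?_⟩
  intro x hx Z hZfin hZcov
  have hxne := (hηsub hx).2
  rcases x with _ | ⟨μ, X⟩
  · exact absurd rfl hxne
  rw [hmemη] at hx
  obtain ⟨hμ1, hμ2, hXH⟩ := hx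
  obtain ⟨m, hm, rfl⟩ : ∃ m : ℕ, (m : ℕ∞) ≤ wlen w ∧ μ = wtake w m :=
    ⟨μ.length, hμ1, hμ2⟩
  rw [wtake_length_of_le hm] at hXH
  have hXH' := hXH
  rw [hHeq m hm] at hXH'
  obtain ⟨hXBw, C, hCF, hCX⟩ := hXH'
  have hCBw : C ∈ L.Bw (α ++ wtake w m) := by
    have := (hFfil m hm).1 hCF
    rwa [hwtu m] at this
  have hCne : C ≠ ∅ := by rintro rfl; exact (hFfil m hm).2.2.1 hCF
  have hx' : some (α ++ wtake w m, C) ∈ ξ := by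
    rw [hξeq, LabelledSpace.mem_filterOf_iff hαw hF]
    have hlen : (α ++ wtake w m).length = a + m := by
      rw [List.length_append, wtake_length_of_le hm]
    rw [hlen]
    exact ⟨hle_u hm, by rw [hwtu m], hCF⟩
  let f : Option (List A × Set V) → Option (List A × Set V) := fun z =>
    match z with
    | none => none
    | some (ν, Y) =>
        if L.relR C (ν.drop m) ∩ Y = ∅ then none
        else some (α ++ ν, L.relR C (ν.drop m) ∩ Y)
  have hfz : ∀ (ν : List A) (Y : Set V), f (some (ν, Y)) =
      if L.relR C (ν.drop m) ∩ Y = ∅ then none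
      else some (α ++ ν, L.relR C (ν.drop m) ∩ Y) := fun _ _ => rfl
  have hfnone : f none = none := rfl
  have hZ1 := hZcov.1
  have hdropm : ∀ δ : List A, (wtake w m ++ δ).drop m = δ := by
    intro δ
    have h := List.drop_left (l₁ := wtake w m) (l₂ := δ)
    rwa [wtake_length_of_le hm] at h
  have hcov' : L.ESCover (some (α ++ wtake w m, C)) (f '' Z) := by
    constructor
    · rintro z' ⟨z, hz, rfl⟩
      obtain ⟨hzm, hzle⟩ := hZ1 z hz
      rcases z with _ | ⟨ν, Y⟩
      · rw [hfnone]; exact ⟨trivial, trivial⟩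
      obtain ⟨δ, hδ, hYsub⟩ := hzle
      dsimp only at hδ hYsub
      subst hδ
      rw [hfz, hdropm δ]
      by_cases hS : L.relR C δ ∩ Y = ∅
      · rw [if_pos hS]; exact ⟨trivial, trivial⟩
      rw [if_neg hS]
      obtain ⟨v, hv1, hv2⟩ := Set.nonempty_iff_ne_empty.mpr hS
      have hCδmem : L.relR C δ ∈ L.ℬ := by
        rcases δ with _ | ⟨b, δ'⟩
        · exact hCBw.1
        · exact L.relR_mem hCBw.1 _ (L.isLbl_of_relR_nonempty (by simp) ⟨v, hv1⟩)
      have hYBw : Y ∈ L.Bw (wtake w m ++ δ) := hzm.1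
      refine ⟨⟨⟨L.inter_mem hCδmem hYBw.1, ?_⟩, hS⟩, δ, by
        dsimp only; rw [List.append_assoc], Set.inter_subset_left⟩
      calc L.relR C δ ∩ Y ⊆ L.relR C δ := Set.inter_subset_left
        _ ⊆ L.relR (L.wr (α ++ wtake w m)) δ := L.relR_mono hCBw.2 δ
        _ = L.wr ((α ++ wtake w m) ++ δ) := (L.wr_append _ _).symm
        _ = L.wr (α ++ (wtake w m ++ δ)) := by rw [List.append_assoc]
    · intro y hym hyne hyle
      rcases y with _ | ⟨ρ, W⟩
      · exact absurd rfl hyne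
      obtain ⟨ε, hε, hWC⟩ := hyle
      dsimp only at hε hWC
      subst hε
      have hWmem : W ∈ L.Bw ((α ++ wtake w m) ++ ε) := hym.1
      have hWne : W ≠ ∅ := hym.2
      have hy'' : L.ESmem (some (wtake w m ++ ε, W)) := by
        refine ⟨⟨hWmem.1, ?_⟩, hWne⟩
        have h2 := hWmem.2
        rw [List.append_assoc] at h2
        exact h2.trans (L.wr_append_subset α _)
      have hy''le : L.ESle (some (wtake w m ++ ε, W)) (some (wtake w m, X)) :=
        ⟨ε, rfl, hWC.trans (L.relR_mono hCX ε)⟩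
      obtain ⟨z, hzZ, hmul⟩ := hZcov.2 (some (wtake w m ++ ε, W)) hy'' (by simp) hy''le
      rcases z with _ | ⟨ν, Y⟩
      · exact absurd (LabelledSpace.ESmul_some_none L _) hmul
      obtain ⟨hzm, hzle⟩ := hZ1 _ hzZ
      obtain ⟨δ, hδ, hYX⟩ := hzle
      dsimp only at hδ hYX
      subst hδ
      have hYmem : Y ∈ L.ℬ := hzm.1.1
      have hYne : Y ≠ ∅ := hzm.2
      have hδlbl : L.IsLbl δ := by
        have hwrne : (L.wr (wtake w m ++ δ)).Nonempty := by
          obtain ⟨v, hv⟩ := Set.nonempty_iff_ne_empty.mpr hYne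
          exact ⟨v, hzm.1.2 hv⟩
        have h3 := L.isLbl_drop (L.isLbl_of_wr_nonempty hwrne) (wtake w m).length
        rwa [List.drop_left] at h3
      refine ⟨f (some (wtake w m ++ δ, Y)), Set.mem_image_of_mem f hzZ, ?_⟩
      by_cases h1 : (wtake w m ++ ε) <+: (wtake w m ++ δ)
      · -- ε is a prefix of δ
        obtain ⟨δ₂, hδ₂⟩ := (List.prefix_append_right_inj _).mp h1
        subst hδ₂
        have hdrop1 : (wtake w m ++ (ε ++ δ₂)).drop (wtake w m ++ ε).length = δ₂ := by
          rw [← List.append_assoc]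
          exact List.drop_left
        rw [LabelledSpace.ESmul_some_some] at hmul
        dsimp only at hmul
        rw [if_pos h1, hdrop1] at hmul
        by_cases h2 : L.relR W δ₂ ∩ Y = ∅
        · rw [if_pos h2] at hmul; exact absurd rfl hmul
        have hsub : L.relR W δ₂ ⊆ L.relR C (ε ++ δ₂) := by
          rw [L.relR_comp]; exact L.relR_mono hWC δ₂
        obtain ⟨v, hv1, hv2⟩ := Set.nonempty_iff_ne_empty.mpr h2
        have hSne : L.relR C (ε ++ δ₂) ∩ Y ≠ ∅ :=
          Set.nonempty_iff_ne_empty.mp ⟨v, hsub hv1, hv2⟩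
        rw [hfz, hdropm (ε ++ δ₂), if_neg hSne, LabelledSpace.ESmul_some_some]
        dsimp only
        have hpre : ((α ++ wtake w m) ++ ε) <+: (α ++ (wtake w m ++ (ε ++ δ₂))) :=
          ⟨δ₂, by simp [List.append_assoc]⟩
        rw [if_pos hpre]
        have hdrop2 : (α ++ (wtake w m ++ (ε ++ δ₂))).drop ((α ++ wtake w m) ++ ε).length
            = δ₂ := by
          rw [show α ++ (wtake w m ++ (ε ++ δ₂)) = ((α ++ wtake w m) ++ ε) ++ δ₂ by
            simp [List.append_assoc]]
          exact List.drop_left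
        rw [hdrop2]
        have hcond : L.relR W δ₂ ∩ (L.relR C (ε ++ δ₂) ∩ Y) ≠ ∅ :=
          Set.nonempty_iff_ne_empty.mp ⟨v, hv1, hsub hv1, hv2⟩
        rw [if_neg hcond]
        simp
      by_cases h3 : (wtake w m ++ δ) <+: (wtake w m ++ ε)
      · -- δ is a proper prefix of ε
        obtain ⟨ε₂, hε₂⟩ := (List.prefix_append_right_inj _).mp h3
        subst hε₂
        have hε₂ne : ε₂ ≠ [] := by
          rintro rfl
          exact h1 (by simp)
        have hdrop3 : (wtake w m ++ (δ ++ ε₂)).drop (wtake w m ++ δ).length = ε₂ := by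
          rw [← List.append_assoc]
          exact List.drop_left
        rw [LabelledSpace.ESmul_some_some] at hmul
        dsimp only at hmul
        rw [if_neg h1, if_pos h3, hdrop3] at hmul
        by_cases h4 : W ∩ L.relR Y ε₂ = ∅
        · rw [if_pos h4] at hmul; exact absurd rfl hmul
        have hCδmem : L.relR C δ ∈ L.ℬ := L.relR_mem hCBw.1 δ hδlbl
        have hrelS : L.relR (L.relR C δ ∩ Y) ε₂ = L.relR C (δ ++ ε₂) ∩ L.relR Y ε₂ := by
          rw [hwlr hCδmem hYmem ε₂ hε₂ne, L.relR_comp]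
        have hkey2 : W ∩ L.relR (L.relR C δ ∩ Y) ε₂ = W ∩ L.relR Y ε₂ := by
          rw [hrelS, ← Set.inter_assoc, Set.inter_eq_self_of_subset_left hWC]
        have hSne : L.relR C δ ∩ Y ≠ ∅ := by
          intro h0
          apply h4
          rw [← hkey2, L.relR_eq_empty h0, Set.inter_empty]
        rw [hfz, hdropm δ, if_neg hSne, LabelledSpace.ESmul_some_some]
        dsimp only
        have hnp1 : ¬ ((α ++ wtake w m) ++ (δ ++ ε₂) <+: α ++ (wtake w m ++ δ)) := by
          intro hcon
          have hlen := hcon.length_le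
          have hε₂pos : 0 < ε₂.length := List.length_pos_iff.mpr hε₂ne
          simp only [List.length_append] at hlen
          omega
        have hp2 : α ++ (wtake w m ++ δ) <+: (α ++ wtake w m) ++ (δ ++ ε₂) :=
          ⟨ε₂, by simp [List.append_assoc]⟩
        rw [if_neg hnp1, if_pos hp2]
        have hdrop4 : ((α ++ wtake w m) ++ (δ ++ ε₂)).drop (α ++ (wtake w m ++ δ)).length
            = ε₂ := by
          rw [show (α ++ wtake w m) ++ (δ ++ ε₂) = (α ++ (wtake w m ++ δ)) ++ ε₂ by
            simp [List.append_assoc]]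
          exact List.drop_left
        rw [hdrop4, hkey2, if_neg h4]
        simp
      · rw [LabelledSpace.ESmul_some_some] at hmul
        dsimp only at hmul
        rw [if_neg h1, if_neg h3] at hmul
        exact absurd rfl hmul
  obtain ⟨z', hz'Z', hz'ξ⟩ := hT.2 _ hx' (f '' Z) (hZfin.image f) hcov'
  obtain ⟨z, hzZ, rfl⟩ := hz'Z'
  have hz'ne : f z ≠ none := (hT.1.1 hz'ξ).2
  rcases z with _ | ⟨ν, Y⟩
  · exact absurd hfnone hz'ne
  obtain ⟨hzm, hzle⟩ := hZ1 _ hzZ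
  obtain ⟨δ, hδ, hYX⟩ := hzle
  dsimp only at hδ hYX
  subst hδ
  rw [hfz, hdropm δ] at hz'ξ hz'ne
  by_cases hS0 : L.relR C δ ∩ Y = ∅
  · rw [if_pos hS0] at hz'ne; exact absurd rfl hz'ne
  rw [if_neg hS0] at hz'ξ
  rw [hξeq, LabelledSpace.mem_filterOf_iff hαw hF] at hz'ξ
  obtain ⟨h1', h2', h3'⟩ := hz'ξ
  have hlen' : (α ++ (wtake w m ++ δ)).length = a + (wtake w m ++ δ).length := by
    rw [List.length_append]
  rw [hlen'] at h1' h2' h3'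
  set nn := (wtake w m ++ δ).length with hnn_def
  have hnn : (nn : ℕ∞) ≤ wlen w := by
    rw [hlenu] at h1'
    push_cast at h1'
    exact (WithTop.add_le_add_iff_left hane).mp h1'
  have hνeq : wtake w m ++ δ = wtake w nn := by
    rw [hwtu nn] at h2'
    exact List.append_cancel_left h2'
  have hYH : Y ∈ H nn := by
    rw [hHeq nn hnn]
    refine ⟨?_, L.relR C δ ∩ Y, h3', Set.inter_subset_right⟩
    rw [← hνeq]
    exact hzm.1
  refine ⟨some (wtake w m ++ δ, Y), hzZ, ?_⟩
  rw [hmemη]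
  exact ⟨hnn, hνeq, hYH⟩

end
end

section
/- Let (E,ℒ,ℬ) be a weakly left-resolving labelled space with ℬ closed under relative complements. Let ξ be a tight filter in E(S) and let F ⊆ E(S)∖{0} be a finite subset such that ξ ∩ F ≠ ∅ and, for all u,v ∈ F, uv = 0 or u ≤ v or v ≤ u. Let w be the minimum of the (totally ordered) set ξ ∩ F. Then there exists a nonzero z ∈ E(S) with z ≤ w and zu = 0 for every u ∈ F with u < w. -/
open Set

section
variable {V Edg A : Type*} (L : LabelledSpace V Edg A)

/-- If `ξ` is a tight filter in `E(S)`, `F ⊆ E(S)∖{0}` is finite, meets `ξ`, and its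
elements pairwise multiply to zero or are comparable, and `w` is the minimum of `ξ ∩ F`,
then there is a nonzero `z ∈ E(S)` with `z ≤ w` and `zu = 0` for all `u ∈ F` with `u < w`. -/
theorem exists_separating_element (hwlr : L.WeaklyLeftResolving)
    (hc : L.ClosedUnderRelComplements)
    (ξ : Set (Option (List A × Set V))) (hξ : L.IsTightESFilter ξ)
    (F : Set (Option (List A × Set V))) (hFfin : F.Finite) (hF : F ⊆ L.ESnz)
    (hne : (ξ ∩ F).Nonempty)
    (hcomp : ∀ u ∈ F, ∀ v ∈ F, L.ESmul u v = none ∨ L.ESle u v ∨ L.ESle v u)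
    (w : Option (List A × Set V)) (hw : w ∈ ξ ∩ F)
    (hmin : ∀ u ∈ ξ ∩ F, L.ESle w u) :
    ∃ z : Option (List A × Set V), z ∈ L.ESnz ∧ L.ESle z w ∧
      ∀ u ∈ F, L.ESle u w → u ≠ w → L.ESmul z u = none := by
  by_contra hcon
  push_neg at hcon
  set Z : Set (Option (List A × Set V)) := {u | u ∈ F ∧ L.ESle u w ∧ u ≠ w} with hZ
  have hwξ : w ∈ ξ := hw.1
  have hZcov : L.ESCover w Z := by
    refine ⟨fun z hz => ⟨(hF hz.1).1, hz.2.1⟩, ?_⟩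
    intro y hy hyne hyw
    obtain ⟨u, huF, hule, hune, hmul⟩ := hcon y ⟨hy, hyne⟩ hyw
    exact ⟨u, ⟨huF, hule, hune⟩, hmul⟩
  obtain ⟨u, huZ, huξ⟩ := hξ.2 w hwξ Z (hFfin.subset fun u hu => hu.1) hZcov
  have hwu : L.ESle w u := hmin u ⟨huξ, huZ.1⟩
  -- antisymmetry contradiction
  have hwne : w ≠ none := (hξ.1.1 hwξ).2
  obtain ⟨q, rfl⟩ : ∃ q, w = some q := Option.ne_none_iff_exists'.mp hwne
  obtain ⟨p, rfl⟩ : ∃ p, u = some p := by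
    cases u with
    | none => exact absurd hwu (by simp [LabelledSpace.ESle])
    | some p => exact ⟨p, rfl⟩
  obtain ⟨γ, hγ, hγ2⟩ := huZ.2.1
  obtain ⟨δ, hδ, hδ2⟩ := hwu
  have hγnil : γ = [] ∧ δ = [] := by
    have : q.1 = (q.1 ++ γ) ++ δ := by rw [← hγ]; exact hδ
    have hlen := congrArg List.length this
    simp at hlen
    exact hlen
  obtain ⟨rfl, rfl⟩ := hγnil
  have h1 : p.1 = q.1 := by simpa using hγ
  have h2 : p.2 = q.2 := Set.Subset.antisymm hγ2 hδ2
  exact huZ.2.2 (congrArg some (Prod.ext h1 h2))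

end
end
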